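/- The 5-dimensional nilpotent commutative associative algebra A₂₃ degenerates to A₂₄: the structure λ of A₂₄ lies in the closure of the GL(5,ℂ)-orbit O(μ) of the structure μ of A₂₃ (closure in the standard topology on the space of bilinear maps ℂ⁵ × ℂ⁵ → ℂ⁵). -/

import Mathlib

open ContinuousLinearMap

/-- The underlying space `ℂⁿ`. -/
abbrev Vn (n : ℕ) := Fin n → ℂ

/-- The space of bilinear maps `ℂⁿ × ℂⁿ → ℂⁿ` (as continuous linear maps in two
arguments), carrying its standard topology as a finite-dimensional complex vector space. -/
abbrev Bil (n : ℕ) := Vn n →L[ℂ] Vn n →L[ℂ] Vn n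

/-- The action of `GL(n, ℂ)` on bilinear maps: `(g · μ)(x, y) = g (μ (g⁻¹ x) (g⁻¹ y))`. -/
noncomputable def act {n : ℕ} (g : Vn n ≃L[ℂ] Vn n) (μ : Bil n) : Bil n :=
  ((compL ℂ (Vn n) (Vn n) (Vn n)).flip (g.symm : Vn n →L[ℂ] Vn n)).comp
    (((compL ℂ (Vn n) (Vn n) (Vn n)) (g : Vn n →L[ℂ] Vn n)).comp
      (μ.comp (g.symm : Vn n →L[ℂ] Vn n)))

@[simp] lemma act_apply {n : ℕ} (g : Vn n ≃L[ℂ] Vn n) (μ : Bil n) (x y : Vn n) :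
    act g μ x y = g (μ (g.symm x) (g.symm y)) := rfl

/-- The orbit `O(μ)` of a bilinear map under the `GL(n, ℂ)`-action. -/
noncomputable def orbit {n : ℕ} (μ : Bil n) : Set (Bil n) :=
  {ν | ∃ g : Vn n ≃L[ℂ] Vn n, ν = act g μ}

/-- The standard basis `e₁, …, e₅` of `ℂ⁵` (zero-indexed: `e i` is `e_{i+1}`). -/
def e (i : Fin 5) : Vn 5 := Pi.single i 1

/-- Multiplication table of the algebra `𝐀23` (entry `(i, j)` is `eᵢ · eⱼ`). -/
def tblA23 : Fin 5 → Fin 5 → Vn 5 :=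
  ![![0, e 2, 0, 0, 0],
   ![e 2, 0, 0, 0, 0],
   ![0, 0, 0, 0, 0],
   ![0, 0, 0, 0, 0],
   ![0, 0, 0, 0, 0]]

/-- Multiplication table of the algebra `𝐀24` (entry `(i, j)` is `eᵢ · eⱼ`). -/
def tblA24 : Fin 5 → Fin 5 → Vn 5 :=
  ![![e 1, 0, 0, 0, 0],
   ![0, 0, 0, 0, 0],
   ![0, 0, 0, 0, 0],
   ![0, 0, 0, 0, 0],
   ![0, 0, 0, 0, 0]]


noncomputable def Amat (t : ℂ) : Matrix (Fin 5) (Fin 5) ℂ :=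
  !![t⁻¹, 0, 0, 0, 0;
     0, 0, (2*t^2)⁻¹, 0, 0;
     -(t^2)⁻¹, (t^2)⁻¹, 0, 0, 0;
     0, 0, 0, 1, 0;
     0, 0, 0, 0, 1]

def Bmat (t : ℂ) : Matrix (Fin 5) (Fin 5) ℂ :=
  !![t, 0, 0, 0, 0;
     t, 0, t^2, 0, 0;
     0, 2*t^2, 0, 0, 0;
     0, 0, 0, 1, 0;
     0, 0, 0, 0, 1]

lemma AB {t : ℂ} (ht : t ≠ 0) : Amat t * Bmat t = 1 := by
  ext i j
  fin_cases i <;> fin_cases j <;>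
    (try simp [Amat, Bmat, Matrix.mul_apply, Fin.sum_univ_five, Matrix.one_apply,
      Matrix.vecHead, Matrix.vecTail]) <;> (try field_simp) <;> (try ring)

lemma BA {t : ℂ} (ht : t ≠ 0) : Bmat t * Amat t = 1 := by
  ext i j
  fin_cases i <;> fin_cases j <;>
    (try simp [Amat, Bmat, Matrix.mul_apply, Fin.sum_univ_five, Matrix.one_apply,
      Matrix.vecHead, Matrix.vecTail]) <;> (try field_simp) <;> (try ring)

noncomputable def gE (t : ℂ) (ht : t ≠ 0) : Vn 5 ≃L[ℂ] Vn 5 :=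
  LinearEquiv.toContinuousLinearEquiv <|
    LinearEquiv.ofLinear (Amat t).mulVecLin (Bmat t).mulVecLin
      (by rw [← Matrix.mulVecLin_mul, AB ht, Matrix.mulVecLin_one])
      (by rw [← Matrix.mulVecLin_mul, BA ht, Matrix.mulVecLin_one])

lemma gE_symm_apply (t : ℂ) (ht : t ≠ 0) (x : Vn 5) :
    (gE t ht).symm x = (Bmat t).mulVec x := rfl

lemma gE_apply (t : ℂ) (ht : t ≠ 0) (x : Vn 5) :
    gE t ht x = (Amat t).mulVec x := rfl

lemma symm_e0 (t : ℂ) (ht : t ≠ 0) : (gE t ht).symm (e 0) = t • e 0 + t • e 1 := by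
  funext j
  fin_cases j <;>
    simp [gE_symm_apply, e, Bmat, Matrix.mulVec, dotProduct, Fin.sum_univ_five,
      Pi.single_apply]

lemma symm_e1 (t : ℂ) (ht : t ≠ 0) : (gE t ht).symm (e 1) = (2*t^2) • e 2 := by
  funext j
  fin_cases j <;>
    simp [gE_symm_apply, e, Bmat, Matrix.mulVec, dotProduct, Fin.sum_univ_five,
      Pi.single_apply]

lemma symm_e2 (t : ℂ) (ht : t ≠ 0) : (gE t ht).symm (e 2) = t^2 • e 1 := by
  funext j
  fin_cases j <;>
    simp [gE_symm_apply, e, Bmat, Matrix.mulVec, dotProduct, Fin.sum_univ_five,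
      Pi.single_apply]

lemma symm_e3 (t : ℂ) (ht : t ≠ 0) : (gE t ht).symm (e 3) = e 3 := by
  funext j
  fin_cases j <;>
    simp [gE_symm_apply, e, Bmat, Matrix.mulVec, dotProduct, Fin.sum_univ_five,
      Pi.single_apply]

lemma symm_e4 (t : ℂ) (ht : t ≠ 0) : (gE t ht).symm (e 4) = e 4 := by
  funext j
  fin_cases j <;>
    simp [gE_symm_apply, e, Bmat, Matrix.mulVec, dotProduct, Fin.sum_univ_five,
      Pi.single_apply]

lemma g_e2 (t : ℂ) (ht : t ≠ 0) : gE t ht (e 2) = (2*t^2)⁻¹ • e 1 := by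
  funext j
  fin_cases j <;>
    simp [gE_apply, e, Amat, Matrix.mulVec, dotProduct, Fin.sum_univ_five,
      Pi.single_apply]

lemma bil_ext {f g : Bil 5} (h : ∀ i j, f (e i) (e j) = g (e i) (e j)) : f = g := by
  apply ContinuousLinearMap.coe_injective
  apply Module.Basis.ext (Pi.basisFun ℂ (Fin 5))
  intro i
  apply ContinuousLinearMap.coe_injective
  apply Module.Basis.ext (Pi.basisFun ℂ (Fin 5))
  intro j
  simpa [Pi.basisFun_apply, e] using h i j

noncomputable def Ebil : Bil 5 :=
  (ContinuousLinearMap.proj 0).smulRight ((ContinuousLinearMap.proj 2).smulRight (e 1)) +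
  (ContinuousLinearMap.proj 2).smulRight ((ContinuousLinearMap.proj 0).smulRight (e 1))

lemma Ebil_apply (x y : Vn 5) : Ebil x y = x 0 • (y 2 • e 1) + x 2 • (y 0 • e 1) := by
  simp [Ebil]

set_option maxHeartbeats 2000000 in
lemma act_gE (μ lam : Bil 5)
    (hμ : ∀ i j : Fin 5, μ (e i) (e j) = tblA23 i j)
    (hlam : ∀ i j : Fin 5, lam (e i) (e j) = tblA24 i j)
    (t : ℂ) (ht : t ≠ 0) :
    act (gE t ht) μ = lam + (t/2) • Ebil := by
  apply bil_ext
  intro i j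
  rw [act_apply]
  fin_cases i <;> fin_cases j <;>
    (try simp [symm_e0 t ht, symm_e1 t ht, symm_e2 t ht, symm_e3 t ht, symm_e4 t ht,
      hμ, hlam, tblA23, tblA24, Ebil_apply, g_e2 t ht, map_add, map_smul, smul_smul,
      Matrix.vecHead, Matrix.vecTail]) <;>
    (try simp [e, Pi.single_apply, smul_smul]) <;>
    (try (funext k; fin_cases k <;> (try simp [Pi.single_apply]) <;> (try field_simp) <;> (try ring))) <;>
    (try field_simp) <;> (try ring)

set_option maxHeartbeats 1000000
set_option synthInstance.maxHeartbeats 1000000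

noncomputable def instACM : AddCommMonoid (Bil 5) := inferInstance
noncomputable def instMod : @Module ℂ (Bil 5) _ instACM := by unfold instACM; infer_instance

lemma zero_smul_Bil (f : Bil 5) : (0:ℂ) • f = 0 :=
  by ext x y; simp

/-- The $5$-dimensional nilpotent commutative associative algebra `𝐀23` degenerates to
`𝐀24`: the structure `λ` of `𝐀24` lies in the closure of
the `GL(5, ℂ)`-orbit `O(μ)` of the structure `μ` of `𝐀23`. -/
theorem A23_deg_A24 (μ lam : Bil 5)
    (hμ : ∀ i j : Fin 5, μ (e i) (e j) = tblA23 i j)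
    (hlam : ∀ i j : Fin 5, lam (e i) (e j) = tblA24 i j) :
    lam ∈ closure (orbit μ) := by
  have hc : Continuous fun t : ℂ => (t/2) • Ebil :=
    (continuous_id.div_const 2).smul continuous_const
  have h1 : Filter.Tendsto (fun t : ℂ => (t/2) • Ebil)
      (nhdsWithin 0 {(0:ℂ)}ᶜ) (nhds 0) := by
    have h0 := (hc.tendsto 0).mono_left (nhdsWithin_le_nhds (s := {(0:ℂ)}ᶜ))
    rw [show ((0:ℂ)/2) • Ebil = 0 by rw [zero_div]; exact zero_smul_Bil Ebil] at h0
    exact h0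
  have htend : Filter.Tendsto (fun t : ℂ => lam + (t/2) • Ebil)
      (nhdsWithin 0 {(0:ℂ)}ᶜ) (nhds lam) := by
    have h2 := ((Homeomorph.addLeft lam).continuous.tendsto 0).comp h1
    simp only [Function.comp_def, Homeomorph.coe_addLeft] at h2
    rw [show lam + (0 : Bil 5) = lam from add_zero lam] at h2
    exact h2
  refine mem_closure_of_tendsto htend ?_
  filter_upwards [self_mem_nhdsWithin] with t ht
  exact ⟨gE t ht, (act_gE μ lam hμ hlam t ht).symm⟩
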